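/- arXiv:2106.03787 — 2 statements merged into one kernel-verified Lean document; each statement's English description precedes it below -/
import Mathlib

section
/- Let μ be a probability measure on S×A satisfying the Bellman flow constraint ∑_a μ(·,a) = (1-γ)ρ₀ + γ P^⊤ μ, with state marginal ρ(s) = ∑_a μ(s,a). Define the policy π(a|s) = μ(s,a)/ρ(s) whenever ρ(s) > 0 (and arbitrary otherwise). Then the discounted occupancy measure induced by π equals μ. -/
noncomputable section
open scoped BigOperators

def IsDist {X : Type*} [Fintype X] (p : X → ℝ) : Prop :=
  (∀ x, 0 ≤ p x) ∧ ∑ x, p x = 1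

def IsPolicy {S A : Type*} [Fintype A] (π : S → A → ℝ) : Prop :=
  ∀ s, IsDist (π s)

def IsKernel {S A : Type*} [Fintype S] (P : S → A → S → ℝ) : Prop :=
  ∀ s a, IsDist (P s a)

/-- Probability of (S_t = s, A_t = a) under policy `π`, kernel `P`, initial law `ρ0`. -/
def saDist {S A : Type*} [Fintype S] [Fintype A] (P : S → A → S → ℝ) (π : S → A → ℝ)
    (ρ0 : S → ℝ) : ℕ → S → A → ℝ
  | 0 => fun s a => ρ0 s * π s a
  | (t + 1) => fun s a => π s a * ∑ s' : S, ∑ a' : A, P s' a' s * saDist P π ρ0 t s' a'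

/-- Discounted state-action occupancy measure of policy `π`. -/
def occ {S A : Type*} [Fintype S] [Fintype A] (γ : ℝ) (P : S → A → S → ℝ)
    (π : S → A → ℝ) (ρ0 : S → ℝ) (s : S) (a : A) : ℝ :=
  (1 - γ) * ∑' t : ℕ, γ ^ t * saDist P π ρ0 t s a

/-- The Bellman flow constraint set `M`. -/
def InFlow {S A : Type*} [Fintype S] [Fintype A] (γ : ℝ) (P : S → A → S → ℝ)
    (ρ0 : S → ℝ) (μ : S → A → ℝ) : Prop :=
  IsDist (fun p : S × A => μ p.1 p.2) ∧
  ∀ s, ∑ a, μ s a = (1 - γ) * ρ0 s + γ * ∑ s' : S, ∑ a' : A, P s' a' s * μ s' a'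

/-- If `μ` satisfies the Bellman flow constraint and `π(a|s) = μ(s,a)/ρ(s)`
whenever `ρ(s) = ∑_a μ(s,a) > 0` (arbitrary otherwise), then the discounted
occupancy measure induced by `π` equals `μ`. -/
theorem stmt3 {S A : Type*} [Fintype S] [Fintype A] [Nonempty S] [Nonempty A]
    (γ : ℝ) (hγ : γ ∈ Set.Ioo (0 : ℝ) 1)
    (P : S → A → S → ℝ) (hP : IsKernel P)
    (ρ0 : S → ℝ) (hρ0 : IsDist ρ0)
    (μ : S → A → ℝ) (hμ : InFlow γ P ρ0 μ)
    (π : S → A → ℝ) (hπ : IsPolicy π)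
    (hcond : ∀ s a, (∑ a', μ s a') ≠ 0 → π s a = μ s a / ∑ a', μ s a') :
    ∀ s a, occ γ P π ρ0 s a = μ s a := by
  obtain ⟨hγ0, hγ1⟩ := hγ
  have hγ0' : (0:ℝ) ≤ γ := le_of_lt hγ0
  set ρ : S → ℝ := fun s => ∑ a, μ s a with hρdef
  have hμnn : ∀ s a, 0 ≤ μ s a := fun s a => hμ.1.1 (s, a)
  have hμeq : ∀ s a, μ s a = π s a * ρ s := by
    intro s a
    by_cases h : ρ s = 0
    · have : μ s a = 0 := by
        have := Finset.sum_eq_zero_iff_of_nonneg (fun a _ => hμnn s a) |>.mp h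
        exact this a (Finset.mem_univ a)
      simp [this, h]
    · rw [hcond s a h]; field_simp
      exact (mul_div_cancel_right₀ _ h).symm
  -- state marginal of saDist
  set e : ℕ → S → ℝ := fun t s => ∑ a, saDist P π ρ0 t s a with hedef
  have hsa : ∀ t s a, saDist P π ρ0 t s a = π s a * e t s := by
    intro t
    induction t with
    | zero =>
      intro s a
      have : e 0 s = ρ0 s := by
        simp [hedef, saDist, ← Finset.mul_sum, (hπ s).2]
      rw [this]; simp [saDist]; ring
    | succ t ih =>
      intro s a
      have : e (t+1) s = ∑ s' : S, ∑ a' : A, P s' a' s * saDist P π ρ0 t s' a' := by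
        simp [hedef, saDist, ← Finset.sum_mul, (hπ s).2]
      rw [this]; simp [saDist]
  have he0 : ∀ s, e 0 s = ρ0 s := by
    intro s; simp [hedef, saDist, ← Finset.mul_sum, (hπ s).2]
  have hestep : ∀ t s, e (t+1) s = ∑ s' : S, ∑ a' : A, P s' a' s * π s' a' * e t s' := by
    intro t s
    have : e (t+1) s = ∑ s' : S, ∑ a' : A, P s' a' s * saDist P π ρ0 t s' a' := by
      simp [hedef, saDist, ← Finset.sum_mul, (hπ s).2]
    rw [this]
    refine Finset.sum_congr rfl fun s' _ => Finset.sum_congr rfl fun a' _ => ?_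
    rw [hsa t s' a']; ring
  have henn : ∀ t s, 0 ≤ e t s := by
    intro t
    induction t with
    | zero => intro s; rw [he0]; exact hρ0.1 s
    | succ t ih =>
      intro s; rw [hestep]
      refine Finset.sum_nonneg fun s' _ => Finset.sum_nonneg fun a' _ => ?_
      exact mul_nonneg (mul_nonneg ((hP s' a').1 s) ((hπ s').1 a')) (ih s')
  have hesum : ∀ t, ∑ s, e t s = 1 := by
    intro t
    induction t with
    | zero => simp [he0, hρ0.2]
    | succ t ih =>
      have : ∑ s, e (t+1) s = ∑ s' : S, ∑ a' : A, (∑ s, P s' a' s) * (π s' a' * e t s') := by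
        simp_rw [hestep]
        rw [Finset.sum_comm]
        refine Finset.sum_congr rfl fun s' _ => ?_
        rw [Finset.sum_comm]
        refine Finset.sum_congr rfl fun a' _ => ?_
        rw [Finset.sum_mul]
        refine Finset.sum_congr rfl fun s _ => by ring
      rw [this]
      calc ∑ s' : S, ∑ a' : A, (∑ s, P s' a' s) * (π s' a' * e t s')
          = ∑ s' : S, ∑ a' : A, π s' a' * e t s' := by
            refine Finset.sum_congr rfl fun s' _ => Finset.sum_congr rfl fun a' _ => ?_
            rw [(hP s' a').2, one_mul]
        _ = ∑ s' : S, e t s' := by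
            refine Finset.sum_congr rfl fun s' _ => ?_
            rw [← Finset.sum_mul, (hπ s').2, one_mul]
        _ = 1 := ih
  have hele : ∀ t s, e t s ≤ 1 := by
    intro t s
    calc e t s ≤ ∑ s', e t s' :=
          Finset.single_le_sum (fun s' _ => henn t s') (Finset.mem_univ s)
      _ = 1 := hesum t
  have hsumm : ∀ s, Summable (fun t => γ ^ t * e t s) := by
    intro s
    refine Summable.of_nonneg_of_le (fun t => mul_nonneg (pow_nonneg hγ0' t) (henn t s))
      (fun t => ?_) (summable_geometric_of_lt_one hγ0' hγ1)
    calc γ ^ t * e t s ≤ γ ^ t * 1 :=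
          mul_le_mul_of_nonneg_left (hele t s) (pow_nonneg hγ0' t)
      _ = γ ^ t := mul_one _
  set D : S → ℝ := fun s => (1 - γ) * ∑' t, γ ^ t * e t s with hDdef
  have hDeq : ∀ s, D s = (1-γ) * ρ0 s + γ * ∑ s' : S, ∑ a' : A, P s' a' s * π s' a' * D s' := by
    intro s
    have h1 : (∑' t, γ ^ t * e t s)
        = γ ^ 0 * e 0 s + ∑' t, γ ^ (t+1) * e (t+1) s := Summable.tsum_eq_zero_add (hsumm s)
    have h2 : (∑' t, γ ^ (t+1) * e (t+1) s)
        = ∑ s' : S, ∑ a' : A, P s' a' s * π s' a' * (γ * ∑' t, γ ^ t * e t s') := by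
      have hrw : ∀ t, γ ^ (t+1) * e (t+1) s
          = ∑ s' : S, ∑ a' : A, P s' a' s * π s' a' * (γ * (γ ^ t * e t s')) := by
        intro t
        rw [hestep, Finset.mul_sum]
        refine Finset.sum_congr rfl fun s' _ => ?_
        rw [Finset.mul_sum]
        refine Finset.sum_congr rfl fun a' _ => ?_
        ring
      rw [tsum_congr hrw]
      rw [Summable.tsum_finsetSum (fun s' _ => summable_sum fun a' _ =>
        (((hsumm s').mul_left γ).mul_left (P s' a' s * π s' a')))]
      refine Finset.sum_congr rfl fun s' _ => ?_
      rw [Summable.tsum_finsetSum (fun a' _ => ((hsumm s').mul_left γ).mul_left (P s' a' s * π s' a'))]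
      refine Finset.sum_congr rfl fun a' _ => ?_
      rw [tsum_mul_left, tsum_mul_left]
    rw [hDdef]
    simp only
    rw [h1, h2, he0, pow_zero, one_mul, mul_add]
    congr 1
    rw [Finset.mul_sum, Finset.mul_sum]
    refine Finset.sum_congr rfl fun s' _ => ?_
    rw [Finset.mul_sum, Finset.mul_sum]
    refine Finset.sum_congr rfl fun a' _ => ?_
    ring
  have hρeq : ∀ s, ρ s = (1-γ) * ρ0 s + γ * ∑ s' : S, ∑ a' : A, P s' a' s * π s' a' * ρ s' := by
    intro s
    have := hμ.2 s
    rw [hρdef]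
    simp only
    rw [this]
    congr 2
    refine Finset.sum_congr rfl fun s' _ => Finset.sum_congr rfl fun a' _ => ?_
    rw [hμeq s' a']; ring
  -- uniqueness
  have hveq : ∀ s, D s - ρ s = γ * ∑ s' : S, ∑ a' : A, P s' a' s * π s' a' * (D s' - ρ s') := by
    intro s
    have h : ∑ s' : S, ∑ a' : A, P s' a' s * π s' a' * (D s' - ρ s')
        = (∑ s' : S, ∑ a' : A, P s' a' s * π s' a' * D s')
          - (∑ s' : S, ∑ a' : A, P s' a' s * π s' a' * ρ s') := by
      rw [← Finset.sum_sub_distrib]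
      refine Finset.sum_congr rfl fun s' _ => ?_
      rw [← Finset.sum_sub_distrib]
      refine Finset.sum_congr rfl fun a' _ => by ring
    rw [hDeq s, hρeq s, h]
    ring
  have hDρ : ∀ s, D s = ρ s := by
    have key : ∑ s, |D s - ρ s| ≤ γ * ∑ s, |D s - ρ s| := by
      calc ∑ s, |D s - ρ s|
          ≤ ∑ s, γ * ∑ s' : S, ∑ a' : A, P s' a' s * π s' a' * |D s' - ρ s'| := by
            refine Finset.sum_le_sum fun s _ => ?_
            rw [hveq s, abs_mul, abs_of_nonneg hγ0']
            refine mul_le_mul_of_nonneg_left ?_ hγ0'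
            calc |∑ s' : S, ∑ a' : A, P s' a' s * π s' a' * (D s' - ρ s')|
                ≤ ∑ s' : S, |∑ a' : A, P s' a' s * π s' a' * (D s' - ρ s')| :=
                  Finset.abs_sum_le_sum_abs _ _
              _ ≤ ∑ s' : S, ∑ a' : A, P s' a' s * π s' a' * |D s' - ρ s'| := by
                  refine Finset.sum_le_sum fun s' _ => ?_
                  refine (Finset.abs_sum_le_sum_abs _ _).trans ?_
                  refine Finset.sum_le_sum fun a' _ => ?_
                  rw [abs_mul, abs_of_nonneg (mul_nonneg ((hP s' a').1 s) ((hπ s').1 a'))]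
        _ = γ * ∑ s' : S, ∑ a' : A, (∑ s, P s' a' s) * (π s' a' * |D s' - ρ s'|) := by
            rw [← Finset.mul_sum]
            congr 1
            rw [Finset.sum_comm]
            refine Finset.sum_congr rfl fun s' _ => ?_
            rw [Finset.sum_comm]
            refine Finset.sum_congr rfl fun a' _ => ?_
            rw [Finset.sum_mul]
            refine Finset.sum_congr rfl fun s _ => by ring
        _ = γ * ∑ s', |D s' - ρ s'| := by
            congr 1
            refine Finset.sum_congr rfl fun s' _ => ?_
            calc ∑ a' : A, (∑ s, P s' a' s) * (π s' a' * |D s' - ρ s'|)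
                = ∑ a' : A, π s' a' * |D s' - ρ s'| := by
                  refine Finset.sum_congr rfl fun a' _ => ?_
                  rw [(hP s' a').2, one_mul]
              _ = |D s' - ρ s'| := by rw [← Finset.sum_mul, (hπ s').2, one_mul]
    have hnn : 0 ≤ ∑ s, |D s - ρ s| := Finset.sum_nonneg fun s _ => abs_nonneg _
    have hzero : ∑ s, |D s - ρ s| = 0 := by nlinarith
    intro s
    have := (Finset.sum_eq_zero_iff_of_nonneg (fun s _ => abs_nonneg (D s - ρ s))).mp hzero
      s (Finset.mem_univ s)
    have := abs_eq_zero.mp this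
    linarith
  intro s a
  have hocc : occ γ P π ρ0 s a = π s a * D s := by
    rw [occ, hDdef]
    simp only
    rw [tsum_congr (fun t => by rw [hsa t s a]; ring : ∀ t,
      γ ^ t * saDist P π ρ0 t s a = π s a * (γ ^ t * e t s))]
    rw [tsum_mul_left]
    ring
  rw [hocc, hDρ s, ← hμeq]
end
end

section
/- For a finite MDP with reward r ∈ ℝ^{S×A}, the RL objective satisfies max over policies π of ⟨μ_π, r⟩ = max over μ ∈ M of ⟨μ, r⟩, where M is the Bellman flow polytope. In particular, the RL problem is a linear program over M. -/
noncomputable section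
open scoped BigOperators

section Aux

variable {S A : Type*} [Fintype S] [Fintype A]

lemma saDist_nonneg (P : S → A → S → ℝ) (hP : IsKernel P) (π : S → A → ℝ)
    (hπ : IsPolicy π) (ρ0 : S → ℝ) (hρ0 : IsDist ρ0) :
    ∀ t s a, 0 ≤ saDist P π ρ0 t s a := by
  intro t
  induction t with
  | zero => intro s a; exact mul_nonneg (hρ0.1 s) ((hπ s).1 a)
  | succ t ih =>
    intro s a
    refine mul_nonneg ((hπ s).1 a) (Finset.sum_nonneg fun s' _ => Finset.sum_nonneg fun a' _ =>
      mul_nonneg ((hP s' a').1 s) (ih s' a'))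

lemma saDist_sum (P : S → A → S → ℝ) (hP : IsKernel P) (π : S → A → ℝ)
    (hπ : IsPolicy π) (ρ0 : S → ℝ) (hρ0 : IsDist ρ0) :
    ∀ t, ∑ s : S, ∑ a : A, saDist P π ρ0 t s a = 1 := by
  intro t
  induction t with
  | zero =>
    simp only [saDist]
    calc ∑ s : S, ∑ a : A, ρ0 s * π s a = ∑ s : S, ρ0 s * ∑ a : A, π s a := by
          simp [Finset.mul_sum]
      _ = 1 := by simp only [(hπ _).2, mul_one]; exact hρ0.2
  | succ t ih =>
    simp only [saDist]
    calc ∑ s : S, ∑ a : A, π s a * ∑ s' : S, ∑ a' : A, P s' a' s * saDist P π ρ0 t s' a'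
        = ∑ s : S, (∑ a : A, π s a) * ∑ s' : S, ∑ a' : A, P s' a' s * saDist P π ρ0 t s' a' := by
          simp [Finset.sum_mul]
      _ = ∑ s : S, ∑ s' : S, ∑ a' : A, P s' a' s * saDist P π ρ0 t s' a' := by
          simp only [(hπ _).2, one_mul]
      _ = ∑ s' : S, ∑ a' : A, (∑ s : S, P s' a' s) * saDist P π ρ0 t s' a' := by
          rw [Finset.sum_comm]
          refine Finset.sum_congr rfl fun s' _ => ?_
          rw [Finset.sum_comm]
          refine Finset.sum_congr rfl fun a' _ => ?_
          rw [Finset.sum_mul]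
      _ = 1 := by simp only [(hP _ _).2, one_mul]; exact ih

lemma saDist_le_one (P : S → A → S → ℝ) (hP : IsKernel P) (π : S → A → ℝ)
    (hπ : IsPolicy π) (ρ0 : S → ℝ) (hρ0 : IsDist ρ0) (t : ℕ) (s : S) (a : A) :
    saDist P π ρ0 t s a ≤ 1 := by
  have h := saDist_sum P hP π hπ ρ0 hρ0 t
  calc saDist P π ρ0 t s a
      ≤ ∑ a : A, saDist P π ρ0 t s a :=
        Finset.single_le_sum (fun a' _ => saDist_nonneg P hP π hπ ρ0 hρ0 t s a')
          (Finset.mem_univ a)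
    _ ≤ ∑ s : S, ∑ a : A, saDist P π ρ0 t s a :=
        Finset.single_le_sum (fun s' _ => Finset.sum_nonneg fun a' _ =>
          saDist_nonneg P hP π hπ ρ0 hρ0 t s' a') (Finset.mem_univ s)
    _ = 1 := h

lemma saDist_summable (γ : ℝ) (hγ : γ ∈ Set.Ioo (0 : ℝ) 1) (P : S → A → S → ℝ)
    (hP : IsKernel P) (π : S → A → ℝ) (hπ : IsPolicy π) (ρ0 : S → ℝ) (hρ0 : IsDist ρ0)
    (s : S) (a : A) : Summable (fun t : ℕ => γ ^ t * saDist P π ρ0 t s a) := by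
  refine Summable.of_nonneg_of_le (fun t => mul_nonneg (pow_nonneg hγ.1.le t)
    (saDist_nonneg P hP π hπ ρ0 hρ0 t s a)) (fun t => ?_)
    (summable_geometric_of_lt_one hγ.1.le hγ.2)
  calc γ ^ t * saDist P π ρ0 t s a ≤ γ ^ t * 1 :=
        mul_le_mul_of_nonneg_left (saDist_le_one P hP π hπ ρ0 hρ0 t s a) (pow_nonneg hγ.1.le t)
    _ = γ ^ t := mul_one _

lemma occ_sum_eq (γ : ℝ) (hγ : γ ∈ Set.Ioo (0 : ℝ) 1) (P : S → A → S → ℝ)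
    (hP : IsKernel P) (π : S → A → ℝ) (hπ : IsPolicy π) (ρ0 : S → ℝ) (hρ0 : IsDist ρ0)
    (s : S) : ∑ a : A, occ γ P π ρ0 s a
      = (1 - γ) * ∑' t : ℕ, γ ^ t * ∑ a : A, saDist P π ρ0 t s a := by
  have hsumm := saDist_summable γ hγ P hP π hπ ρ0 hρ0
  calc ∑ a : A, occ γ P π ρ0 s a
      = (1 - γ) * ∑ a : A, ∑' t : ℕ, γ ^ t * saDist P π ρ0 t s a := by
        simp only [occ, Finset.mul_sum]
    _ = (1 - γ) * ∑' t : ℕ, ∑ a : A, γ ^ t * saDist P π ρ0 t s a := by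
        rw [Summable.tsum_finsetSum (fun a _ => hsumm s a)]
    _ = (1 - γ) * ∑' t : ℕ, γ ^ t * ∑ a : A, saDist P π ρ0 t s a := by
        congr 1; exact tsum_congr fun t => (Finset.mul_sum _ _ _).symm

lemma saDist_factor (P : S → A → S → ℝ) (π : S → A → ℝ) (hπ : IsPolicy π)
    (ρ0 : S → ℝ) (t : ℕ) (s : S) (a : A) :
    saDist P π ρ0 t s a = π s a * ∑ b : A, saDist P π ρ0 t s b := by
  cases t with
  | zero =>
    simp only [saDist]
    rw [← Finset.mul_sum, (hπ s).2, mul_one]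
    ring
  | succ t =>
    simp only [saDist]
    rw [← Finset.sum_mul, (hπ s).2, one_mul]

set_option maxHeartbeats 1000000 in
lemma occ_inFlow (γ : ℝ) (hγ : γ ∈ Set.Ioo (0 : ℝ) 1) (P : S → A → S → ℝ)
    (hP : IsKernel P) (π : S → A → ℝ) (hπ : IsPolicy π) (ρ0 : S → ℝ) (hρ0 : IsDist ρ0) :
    InFlow γ P ρ0 (occ γ P π ρ0) := by
  have hγ1 : (0:ℝ) < 1 - γ := by linarith [hγ.2]
  have hsumm : ∀ s a, Summable (fun t : ℕ => γ ^ t * saDist P π ρ0 t s a) :=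
    saDist_summable γ hγ P hP π hπ ρ0 hρ0
  have hnn := saDist_nonneg P hP π hπ ρ0 hρ0
  constructor
  · constructor
    · intro p
      exact mul_nonneg hγ1.le (tsum_nonneg fun t =>
        mul_nonneg (pow_nonneg hγ.1.le t) (hnn t p.1 p.2))
    · calc ∑ p : S × A, occ γ P π ρ0 p.1 p.2
          = (1 - γ) * ∑ p : S × A, ∑' t : ℕ, γ ^ t * saDist P π ρ0 t p.1 p.2 := by
            simp only [occ, Finset.mul_sum]
        _ = (1 - γ) * ∑' t : ℕ, ∑ p : S × A, γ ^ t * saDist P π ρ0 t p.1 p.2 := by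
            rw [Summable.tsum_finsetSum (fun p _ => hsumm p.1 p.2)]
        _ = (1 - γ) * ∑' t : ℕ, γ ^ t := by
            congr 1
            refine tsum_congr fun t => ?_
            rw [← Finset.mul_sum]
            have : ∑ p : S × A, saDist P π ρ0 t p.1 p.2 = 1 := by
              rw [Fintype.sum_prod_type]; exact saDist_sum P hP π hπ ρ0 hρ0 t
            rw [this, mul_one]
        _ = 1 := by
            rw [tsum_geometric_of_lt_one hγ.1.le hγ.2]
            field_simp
  · intro s
    set d := saDist P π ρ0 with hd
    have hsAsumm : ∀ s, Summable (fun t : ℕ => γ ^ t * ∑ a : A, d t s a) := by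
      intro s
      have : (fun t : ℕ => γ ^ t * ∑ a : A, d t s a)
          = fun t : ℕ => ∑ a : A, γ ^ t * d t s a := by
        funext t; rw [Finset.mul_sum]
      rw [this]
      exact summable_sum fun a _ => hsumm s a
    have hocc : ∀ s, ∑ a : A, occ γ P π ρ0 s a
        = (1 - γ) * ∑' t : ℕ, γ ^ t * ∑ a : A, d t s a :=
      fun s => occ_sum_eq γ hγ P hP π hπ ρ0 hρ0 s
    rw [hocc s]
    have hstep : ∀ t : ℕ, ∑ a : A, d (t+1) s a = ∑ s' : S, ∑ a' : A, P s' a' s * d t s' a' := by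
      intro t
      have : ∀ a : A, d (t+1) s a = π s a * ∑ s' : S, ∑ a' : A, P s' a' s * d t s' a' := by
        intro a; rfl
      simp only [this, ← Finset.sum_mul, (hπ s).2, one_mul]
    have hzero : ∑ a : A, d 0 s a = ρ0 s := by
      have : ∀ a : A, d 0 s a = ρ0 s * π s a := fun a => rfl
      simp only [this, ← Finset.mul_sum, (hπ s).2, mul_one]
    rw [Summable.tsum_eq_zero_add (hsAsumm s)]
    simp only [pow_zero, one_mul, hzero, pow_succ]
    have hrw : ∀ t : ℕ, γ ^ t * γ * ∑ a : A, d (t+1) s a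
        = γ * (γ ^ t * ∑ s' : S, ∑ a' : A, P s' a' s * d t s' a') := by
      intro t; rw [hstep t]; ring
    rw [tsum_congr hrw, tsum_mul_left]
    have hRHS : ∑ s' : S, ∑ a' : A, P s' a' s * occ γ P π ρ0 s' a'
        = (1 - γ) * ∑' t : ℕ, γ ^ t * ∑ s' : S, ∑ a' : A, P s' a' s * d t s' a' := by
      calc ∑ s' : S, ∑ a' : A, P s' a' s * occ γ P π ρ0 s' a'
          = (1 - γ) * ∑ s' : S, ∑ a' : A, ∑' t : ℕ, P s' a' s * (γ ^ t * d t s' a') := by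
            simp only [occ, Finset.mul_sum, hd]
            refine Finset.sum_congr rfl fun s' _ => Finset.sum_congr rfl fun a' _ => ?_
            rw [tsum_mul_left]; ring
        _ = (1 - γ) * ∑' t : ℕ, ∑ s' : S, ∑ a' : A, P s' a' s * (γ ^ t * d t s' a') := by
            rw [Summable.tsum_finsetSum (fun s' _ => summable_sum fun a' _ => (hsumm s' a').mul_left _)]
            congr 1
            refine Finset.sum_congr rfl fun s' _ => ?_
            rw [Summable.tsum_finsetSum (fun a' _ => (hsumm s' a').mul_left _)]
        _ = (1 - γ) * ∑' t : ℕ, γ ^ t * ∑ s' : S, ∑ a' : A, P s' a' s * d t s' a' := by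
            congr 1
            refine tsum_congr fun t => ?_
            rw [Finset.mul_sum]
            refine Finset.sum_congr rfl fun s' _ => ?_
            rw [Finset.mul_sum]
            exact Finset.sum_congr rfl fun a' _ => by ring
    rw [hRHS]
    ring

lemma occ_factor (γ : ℝ) (hγ : γ ∈ Set.Ioo (0 : ℝ) 1) (P : S → A → S → ℝ)
    (hP : IsKernel P) (π : S → A → ℝ) (hπ : IsPolicy π) (ρ0 : S → ℝ) (hρ0 : IsDist ρ0)
    (s : S) (a : A) : occ γ P π ρ0 s a = π s a * ∑ b : A, occ γ P π ρ0 s b := by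
  calc occ γ P π ρ0 s a
      = (1 - γ) * ∑' t : ℕ, π s a * (γ ^ t * ∑ b : A, saDist P π ρ0 t s b) := by
        unfold occ
        congr 1
        refine tsum_congr fun t => ?_
        rw [saDist_factor P π hπ ρ0 t s a]
        ring
    _ = π s a * ((1 - γ) * ∑' t : ℕ, γ ^ t * ∑ b : A, saDist P π ρ0 t s b) := by
        rw [tsum_mul_left]; ring
    _ = π s a * ∑ b : A, occ γ P π ρ0 s b := by
        rw [occ_sum_eq γ hγ P hP π hπ ρ0 hρ0 s]

lemma flow_unique (γ : ℝ) (hγ : γ ∈ Set.Ioo (0 : ℝ) 1) (P : S → A → S → ℝ)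
    (hP : IsKernel P) (π : S → A → ℝ) (hπ : IsPolicy π) (ρ0 : S → ℝ)
    (μ1 μ2 : S → A → ℝ) (h1 : InFlow γ P ρ0 μ1) (h2 : InFlow γ P ρ0 μ2)
    (f1 : ∀ s a, μ1 s a = π s a * ∑ b : A, μ1 s b)
    (f2 : ∀ s a, μ2 s a = π s a * ∑ b : A, μ2 s b) : μ1 = μ2 := by
  set D : S → ℝ := fun s => (∑ b : A, μ1 s b) - ∑ b : A, μ2 s b with hDdef
  have key : ∀ s, D s = γ * ∑ s' : S, ∑ a' : A, P s' a' s * (π s' a' * D s') := by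
    intro s
    have hterm : ∀ s' a', P s' a' s * (π s' a' * D s')
        = P s' a' s * μ1 s' a' - P s' a' s * μ2 s' a' := by
      intro s' a'
      simp only [hDdef]
      rw [mul_sub, ← f1 s' a', ← f2 s' a', mul_sub]
    simp only [hDdef]
    rw [h1.2 s, h2.2 s]
    simp only [hDdef] at hterm ⊢
    simp only [hterm, Finset.sum_sub_distrib]
    ring
  have habs : ∀ s, |D s| ≤ γ * ∑ s' : S, ∑ a' : A, P s' a' s * (π s' a' * |D s'|) := by
    intro s
    rw [key s, abs_mul, abs_of_nonneg hγ.1.le]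
    refine mul_le_mul_of_nonneg_left ?_ hγ.1.le
    refine (Finset.abs_sum_le_sum_abs _ _).trans (Finset.sum_le_sum fun s' _ => ?_)
    refine (Finset.abs_sum_le_sum_abs _ _).trans (le_of_eq ?_)
    refine Finset.sum_congr rfl fun a' _ => ?_
    rw [abs_mul, abs_of_nonneg ((hP s' a').1 s), abs_mul, abs_of_nonneg ((hπ s').1 a')]
  have hsum_le : ∑ s : S, |D s| ≤ γ * ∑ s : S, |D s| := by
    calc ∑ s : S, |D s|
        ≤ ∑ s : S, γ * ∑ s' : S, ∑ a' : A, P s' a' s * (π s' a' * |D s'|) :=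
          Finset.sum_le_sum fun s _ => habs s
      _ = γ * ∑ s' : S, ∑ a' : A, (∑ s : S, P s' a' s) * (π s' a' * |D s'|) := by
          rw [← Finset.mul_sum]
          congr 1
          rw [Finset.sum_comm]
          refine Finset.sum_congr rfl fun s' _ => ?_
          rw [Finset.sum_comm]
          refine Finset.sum_congr rfl fun a' _ => ?_
          rw [Finset.sum_mul]
      _ = γ * ∑ s : S, |D s| := by
          congr 1
          refine Finset.sum_congr rfl fun s' _ => ?_
          have h1' : ∀ a', (∑ s : S, P s' a' s) = 1 := fun a' => (hP s' a').2
          simp only [h1', one_mul]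
          rw [← Finset.sum_mul, (hπ s').2, one_mul]
  have hnn : (0:ℝ) ≤ ∑ s : S, |D s| := Finset.sum_nonneg fun s _ => abs_nonneg _
  have hz : ∑ s : S, |D s| = 0 := by nlinarith [hγ.2]
  have hDz : ∀ s, D s = 0 := by
    intro s
    exact abs_eq_zero.1 ((Finset.sum_eq_zero_iff_of_nonneg
      (fun s _ => abs_nonneg (D s))).1 hz s (Finset.mem_univ s))
  funext s a
  rw [f1 s a, f2 s a]
  have : (∑ b : A, μ1 s b) = ∑ b : A, μ2 s b := sub_eq_zero.1 (hDz s)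
  rw [this]

lemma flow_realized [Nonempty A] (γ : ℝ) (hγ : γ ∈ Set.Ioo (0 : ℝ) 1) (P : S → A → S → ℝ)
    (hP : IsKernel P) (ρ0 : S → ℝ) (hρ0 : IsDist ρ0) (μ : S → A → ℝ)
    (hμ : InFlow γ P ρ0 μ) : ∃ π : S → A → ℝ, IsPolicy π ∧ occ γ P π ρ0 = μ := by
  classical
  have hμnn : ∀ s a, 0 ≤ μ s a := fun s a => hμ.1.1 (s, a)
  have hνnn : ∀ s, 0 ≤ ∑ b : A, μ s b := fun s => Finset.sum_nonneg fun b _ => hμnn s b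
  set π : S → A → ℝ := fun s a =>
    if (∑ b : A, μ s b) = 0 then (Fintype.card A : ℝ)⁻¹ else μ s a / ∑ b : A, μ s b with hπdef
  have hcard : (0:ℝ) < (Fintype.card A : ℝ) := by
    exact_mod_cast Fintype.card_pos
  have hπ : IsPolicy π := by
    intro s
    constructor
    · intro a
      simp only [hπdef]
      split
      · positivity
      · exact div_nonneg (hμnn s a) (hνnn s)
    · simp only [hπdef]
      split
      · rw [Finset.sum_const, Finset.card_univ, nsmul_eq_mul, mul_inv_cancel₀ hcard.ne']
      · rw [← Finset.sum_div, div_self (by assumption)]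
  have hfac : ∀ s a, μ s a = π s a * ∑ b : A, μ s b := by
    intro s a
    simp only [hπdef]
    split
    · rename_i h
      have : μ s a = 0 :=
        (Finset.sum_eq_zero_iff_of_nonneg (fun b _ => hμnn s b)).1 h a (Finset.mem_univ a)
      rw [this, h, mul_zero]
    · rename_i h
      rw [div_mul_cancel₀ _ h]
  refine ⟨π, hπ, ?_⟩
  refine flow_unique γ hγ P hP π hπ ρ0 _ _ (occ_inFlow γ hγ P hP π hπ ρ0 hρ0) hμ
    (fun s a => occ_factor γ hγ P hP π hπ ρ0 hρ0 s a) hfac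

end Aux

/-- The RL objective satisfies `max_π ⟨μ_π, r⟩ = max_{μ ∈ M} ⟨μ, r⟩`: there is a
common value which is the greatest element of both sets of attainable values,
so the RL problem is a linear program over the Bellman flow polytope `M`. -/
theorem stmt5 {S A : Type*} [Fintype S] [Fintype A] [Nonempty S] [Nonempty A]
    (γ : ℝ) (hγ : γ ∈ Set.Ioo (0 : ℝ) 1)
    (P : S → A → S → ℝ) (hP : IsKernel P)
    (ρ0 : S → ℝ) (hρ0 : IsDist ρ0)
    (r : S → A → ℝ) :
    ∃ v : ℝ,
      IsGreatest {x : ℝ | ∃ π : S → A → ℝ, IsPolicy π ∧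
        x = ∑ s : S, ∑ a : A, occ γ P π ρ0 s a * r s a} v ∧
      IsGreatest {x : ℝ | ∃ μ : S → A → ℝ, InFlow γ P ρ0 μ ∧
        x = ∑ s : S, ∑ a : A, μ s a * r s a} v := by
  classical
  set F : Set (S → A → ℝ) := {μ | InFlow γ P ρ0 μ} with hF
  set L : (S → A → ℝ) → ℝ := fun μ => ∑ s : S, ∑ a : A, μ s a * r s a with hL
  have hsets : {x : ℝ | ∃ π : S → A → ℝ, IsPolicy π ∧
        x = ∑ s : S, ∑ a : A, occ γ P π ρ0 s a * r s a}
      = {x : ℝ | ∃ μ : S → A → ℝ, InFlow γ P ρ0 μ ∧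
        x = ∑ s : S, ∑ a : A, μ s a * r s a} := by
    ext x
    constructor
    · rintro ⟨π, hπ, rfl⟩
      exact ⟨occ γ P π ρ0, occ_inFlow γ hγ P hP π hπ ρ0 hρ0, rfl⟩
    · rintro ⟨μ, hμ, rfl⟩
      obtain ⟨π, hπ, heq⟩ := flow_realized γ hγ P hP ρ0 hρ0 μ hμ
      exact ⟨π, hπ, by rw [heq]⟩
  have hset2 : {x : ℝ | ∃ μ : S → A → ℝ, InFlow γ P ρ0 μ ∧
        x = ∑ s : S, ∑ a : A, μ s a * r s a} = L '' F := by
    ext x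
    constructor
    · rintro ⟨μ, hμ, rfl⟩; exact ⟨μ, hμ, rfl⟩
    · rintro ⟨μ, hμ, rfl⟩; exact ⟨μ, hμ, rfl⟩
  have hev : ∀ (s : S) (a : A), Continuous fun μ : S → A → ℝ => μ s a :=
    fun s a => (continuous_apply a).comp (continuous_apply s)
  have hLcont : Continuous L := by
    refine continuous_finset_sum _ fun s _ => continuous_finset_sum _ fun a _ => ?_
    exact (hev s a).mul continuous_const
  have hFclosed : IsClosed F := by
    have hFeq : F = {μ : S → A → ℝ | ∀ p : S × A, 0 ≤ μ p.1 p.2}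
        ∩ {μ : S → A → ℝ | ∑ p : S × A, μ p.1 p.2 = 1}
        ∩ ⋂ s : S, {μ : S → A → ℝ |
            ∑ a : A, μ s a = (1 - γ) * ρ0 s + γ * ∑ s' : S, ∑ a' : A, P s' a' s * μ s' a'} := by
      ext μ
      constructor
      · rintro ⟨⟨h1, h2⟩, h3⟩
        exact ⟨⟨h1, h2⟩, Set.mem_iInter.2 h3⟩
      · rintro ⟨⟨h1, h2⟩, h3⟩
        exact ⟨⟨h1, h2⟩, fun s => Set.mem_iInter.1 h3 s⟩
    rw [hFeq]
    refine IsClosed.inter (IsClosed.inter ?_ ?_) (isClosed_iInter fun s => ?_)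
    · have : {μ : S → A → ℝ | ∀ p : S × A, 0 ≤ μ p.1 p.2}
          = ⋂ p : S × A, {μ : S → A → ℝ | 0 ≤ μ p.1 p.2} := by
        ext μ; simp [Set.mem_iInter]
      rw [this]
      exact isClosed_iInter fun p => isClosed_le continuous_const (hev p.1 p.2)
    · exact isClosed_eq (continuous_finset_sum _ fun p _ => hev p.1 p.2) continuous_const
    · refine isClosed_eq (continuous_finset_sum _ fun a _ => hev s a) ?_
      refine continuous_const.add (continuous_const.mul ?_)
      exact continuous_finset_sum _ fun s' _ => continuous_finset_sum _ fun a' _ =>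
        continuous_const.mul (hev s' a')
  have hKcomp : IsCompact (Set.univ.pi fun _ : S => Set.univ.pi fun _ : A => Set.Icc (0:ℝ) 1) :=
    isCompact_univ_pi fun _ => isCompact_univ_pi fun _ => isCompact_Icc
  have hFsub : F ⊆ Set.univ.pi fun _ : S => Set.univ.pi fun _ : A => Set.Icc (0:ℝ) 1 := by
    intro μ hμ
    intro s _
    intro a _
    refine ⟨hμ.1.1 (s, a), ?_⟩
    calc μ s a = (fun p : S × A => μ p.1 p.2) (s, a) := rfl
      _ ≤ ∑ p : S × A, μ p.1 p.2 :=
          Finset.single_le_sum (fun p _ => hμ.1.1 p) (Finset.mem_univ (s, a))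
      _ = 1 := hμ.1.2
  have hFcomp : IsCompact F := hKcomp.of_isClosed_subset hFclosed hFsub
  have hcard : (0:ℝ) < (Fintype.card A : ℝ) := by exact_mod_cast Fintype.card_pos
  have hπu : IsPolicy (fun (_ : S) (_ : A) => (Fintype.card A : ℝ)⁻¹) := by
    intro s
    constructor
    · intro a; positivity
    · rw [Finset.sum_const, Finset.card_univ, nsmul_eq_mul, mul_inv_cancel₀ hcard.ne']
  have hFne : F.Nonempty :=
    ⟨occ γ P (fun _ _ => (Fintype.card A : ℝ)⁻¹) ρ0,
      occ_inFlow γ hγ P hP _ hπu ρ0 hρ0⟩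
  obtain ⟨v, hv⟩ := (hFcomp.image hLcont).exists_isGreatest (hFne.image L)
  refine ⟨v, ?_, ?_⟩
  · rw [hsets, hset2]; exact hv
  · rw [hset2]; exact hv
end
end
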